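/- For A = [[1,2],[0,1]] and B = [[1,0],[2,1]], every entry of any product of n matrices, each equal to A or B, is a nonnegative integer bounded above by (1+√2)^{n+1}. -/

import Mathlib

private lemma sqrt2_ge_one : (1:ℝ) ≤ Real.sqrt 2 := by
  nlinarith [Real.sq_sqrt (by norm_num : (0:ℝ) ≤ 2), Real.sqrt_nonneg 2]

private lemma stepA (s x y : ℝ) (hs : s^2 = 2) (hs1 : 1 ≤ s) :
    (x+2*y)^2 + y^2 ≤ (3+2*s)*(x^2+y^2) := by
  nlinarith [sq_nonneg ((1+s)*x - y), sq_nonneg (x+2*y), sq_nonneg x]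

private lemma stepB (s x y : ℝ) (hs : s^2 = 2) (hs1 : 1 ≤ s) :
    x^2 + (2*x+y)^2 ≤ (3+2*s)*(x^2+y^2) := by
  nlinarith [sq_nonneg ((1+s)*y - x), sq_nonneg (2*x+y), sq_nonneg y]

private lemma key (l : List (Matrix (Fin 2) (Fin 2) ℤ))
    (hl : ∀ M ∈ l, M = !![1,2;0,1] ∨ M = !![1,0;2,1]) :
    ∀ j : Fin 2, (0 ≤ l.prod 0 j ∧ 0 ≤ l.prod 1 j) ∧
      ((l.prod 0 j : ℝ)^2 + (l.prod 1 j : ℝ)^2 ≤ (3 + 2*Real.sqrt 2)^l.length) := by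
  induction l with
  | nil =>
    intro j
    fin_cases j <;> simp [Matrix.one_apply] <;> norm_num
  | cons M t ih =>
    have hM := hl M ((List.mem_cons_self (a := M) (l := t)))
    have ht : ∀ N ∈ t, N = !![1,2;0,1] ∨ N = !![1,0;2,1] :=
      fun N hN => hl N (List.mem_cons_of_mem _ hN)
    intro j
    obtain ⟨⟨h0, h1⟩, hsq⟩ := ih ht j
    have hs : (Real.sqrt 2)^2 = 2 := Real.sq_sqrt (by norm_num)
    have hs1 : (1:ℝ) ≤ Real.sqrt 2 := sqrt2_ge_one
    have hmul : (3+2*Real.sqrt 2) * ((t.prod 0 j : ℝ)^2 + (t.prod 1 j : ℝ)^2)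
        ≤ (3+2*Real.sqrt 2)^t.length * (3+2*Real.sqrt 2) := by
      nlinarith [hsq, sq_nonneg ((t.prod 0 j : ℝ)), sq_nonneg ((t.prod 1 j : ℝ))]
    rcases hM with h | h <;> subst h <;>
      refine ⟨⟨?_, ?_⟩, ?_⟩ <;>
      simp only [List.prod_cons, Matrix.mul_apply, Fin.sum_univ_two, List.length_cons,
        Matrix.cons_val', Matrix.cons_val_zero, Matrix.cons_val_one, Matrix.head_cons,
        Matrix.head_fin_const, Matrix.cons_val_fin_one, Matrix.of_apply]
    · linarith
    · linarith
    · push_cast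
      nlinarith [pow_succ (3+2*Real.sqrt 2) t.length, stepA (Real.sqrt 2) (t.prod 0 j : ℝ) (t.prod 1 j : ℝ) hs hs1, hmul]
    · linarith
    · linarith
    · push_cast
      nlinarith [pow_succ (3+2*Real.sqrt 2) t.length, stepB (Real.sqrt 2) (t.prod 0 j : ℝ) (t.prod 1 j : ℝ) hs hs1, hmul]

private lemma bnd (c : ℝ) (hc0 : 0 ≤ c) (x : ℤ) (hx : 0 ≤ x) (h : (x:ℝ)^2 ≤ c^2) :
    (x:ℝ) ≤ c := by
  nlinarith [(by exact_mod_cast hx : (0:ℝ) ≤ (x:ℝ))]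

theorem entries_of_products_bounded
    (A B : Matrix (Fin 2) (Fin 2) ℤ)
    (hA : A = !![1, 2; 0, 1]) (hB : B = !![1, 0; 2, 1])
    (l : List (Matrix (Fin 2) (Fin 2) ℤ)) (hl : ∀ M ∈ l, M = A ∨ M = B) :
    ∀ i j : Fin 2, 0 ≤ l.prod i j ∧
      (l.prod i j : ℝ) ≤ (1 + Real.sqrt 2) ^ (l.length + 1) := by
  subst hA hB
  intro i j
  obtain ⟨⟨h0, h1⟩, hsq⟩ := key l hl j
  have hs : (Real.sqrt 2)^2 = 2 := Real.sq_sqrt (by norm_num)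
  have hs1 : (1:ℝ) ≤ Real.sqrt 2 := sqrt2_ge_one
  have hb : ((1 + Real.sqrt 2) ^ l.length)^2 = (3 + 2*Real.sqrt 2)^l.length := by
    rw [← pow_mul, Nat.mul_comm, pow_mul]
    congr 1
    nlinarith
  have hmono : (1 + Real.sqrt 2) ^ l.length ≤ (1 + Real.sqrt 2) ^ (l.length + 1) :=
    pow_le_pow_right₀ (by linarith) (by omega)
  have hpos : (0:ℝ) ≤ (1 + Real.sqrt 2) ^ l.length := by positivity
  have b0 : (l.prod 0 j : ℝ) ≤ (1 + Real.sqrt 2) ^ l.length := by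
    refine bnd _ hpos _ h0 ?_
    rw [hb]; nlinarith [sq_nonneg ((l.prod 1 j : ℝ))]
  have b1 : (l.prod 1 j : ℝ) ≤ (1 + Real.sqrt 2) ^ l.length := by
    refine bnd _ hpos _ h1 ?_
    rw [hb]; nlinarith [sq_nonneg ((l.prod 0 j : ℝ))]
  fin_cases i
  · exact ⟨h0, le_trans b0 hmono⟩
  · exact ⟨h1, le_trans b1 hmono⟩
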